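/- Every boundary set B of the infinite good set S = {y₁, y₂, …} has exactly 3 elements; consequently S is a full set (a maximal good subset of the product of its projections). -/

import Mathlib

open scoped BigOperators

/-- Symbols: x₁,x₂,x₃,x₄ are 0,1,2,3 and αⱼ = j+3 (so all symbols are distinct naturals). -/
def α (j : ℕ) : ℕ := j + 3

/-- The points y₁, y₂, y₃, … of the paper's construction. -/
def y : ℕ → Fin 4 → ℕ := fun k =>
  if k = 1 then ![0, 1, 2, 3]
  else if k = 2 then ![0, 1, α 1, α 2]
  else match k % 4 with
    | 1 => ![0, α (k - 1), α k, α (k + 1)]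
    | 2 => ![α (k - 3), 1, α (k - 1), α k]
    | 3 => ![α k, α (k + 1), 2, α (k - 1)]
    | _ => ![α (k - 1), α k, α (k - 3), 3]

/-- u = (u₁,u₂,u₃,u₄) solves equation (1) for f on S. -/
def Solves (S : Set (Fin 4 → ℕ)) (f : (Fin 4 → ℕ) → ℂ) (u : Fin 4 → ℕ → ℂ) : Prop :=
  ∀ p ∈ S, f p = ∑ i, u i (p i)

/-- S is good: every complex function on S decomposes into coordinate functions. -/
def IsGood (S : Set (Fin 4 → ℕ)) : Prop := ∀ f, ∃ u, Solves S f u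

/-- i-th projection of S. -/
def proj (S : Set (Fin 4 → ℕ)) (i : Fin 4) : Set ℕ := (fun p => p i) '' S

/-- B is a boundary set of S: for every f and every prescription U on B,
equation (1) admits a solution agreeing with U on B, unique on the projections of S. -/
def IsBoundary (S : Set (Fin 4 → ℕ)) (B : Set ℕ) : Prop :=
  B ⊆ ⋃ i, proj S i ∧
  ∀ f : (Fin 4 → ℕ) → ℂ, ∀ U : ℕ → ℂ,
    (∃ u, Solves S f u ∧ ∀ i, ∀ a ∈ B ∩ proj S i, u i a = U a) ∧
    ∀ u v, Solves S f u → (∀ i, ∀ a ∈ B ∩ proj S i, u i a = U a) →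
      Solves S f v → (∀ i, ∀ a ∈ B ∩ proj S i, v i a = U a) →
      ∀ i, ∀ a ∈ proj S i, u i a = v i a

/-- S is full: a maximal good subset of the product of its projections. -/
def IsFull (S : Set (Fin 4 → ℕ)) : Prop :=
  IsGood S ∧ ∀ T : Set (Fin 4 → ℕ), S ⊆ T → (∀ p ∈ T, ∀ i, p i ∈ proj S i) →
    IsGood T → T = S

/-- Sₙ = {y₁,…,y_N}. -/
def Sn (N : ℕ) : Set (Fin 4 → ℕ) := y '' Set.Icc 1 N

/-- The infinite set S = {y₁, y₂, …}. -/
def Sinf : Set (Fin 4 → ℕ) := y '' Set.Ici 1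

/-- The extra point z = zₙ = (α_{4n−1}, x₂, α_{4n−3}, x₄). -/
def z (n : ℕ) : Fin 4 → ℕ := ![α (4 * n - 1), 1, α (4 * n - 3), 3]

/-- Two points of S are related iff some finite full subset of S contains both. -/
def Related (S : Set (Fin 4 → ℕ)) (p q : Fin 4 → ℕ) : Prop :=
  ∃ K, K ⊆ S ∧ K.Finite ∧ IsFull K ∧ p ∈ K ∧ q ∈ K

/-- The 4n×4n incidence matrix A_{4n}: rows y₂,…,y_{4n},zₙ; columns α₁,…,α_{4n}. -/
def A (n : ℕ) : Matrix (Fin (4 * n)) (Fin (4 * n)) ℚ :=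
  Matrix.of fun i j =>
    if ∃ k, (if (i : ℕ) = 4 * n - 1 then z n else y ((i : ℕ) + 2)) k = (j : ℕ) + 4
    then 1 else 0

lemma y_one : y 1 = ![0, 1, 2, 3] := by simp [y]

lemma y_two : y 2 = ![0, 1, α 1, α 2] := by simp [y]

lemma y_m3 (n : ℕ) : y (4*n+3) = ![α (4*n+3), α (4*n+4), 2, α (4*n+2)] := by
  have h1 : 4*n+3 ≠ 1 := by omega
  have h2 : 4*n+3 ≠ 2 := by omega
  have h3 : (4*n+3) % 4 = 3 := by omega
  simp only [y, h1, h2, if_false, h3]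
  funext i; fin_cases i <;> simp [α] <;> omega

lemma y_m0 (n : ℕ) : y (4*n+4) = ![α (4*n+3), α (4*n+4), α (4*n+1), 3] := by
  have h1 : 4*n+4 ≠ 1 := by omega
  have h2 : 4*n+4 ≠ 2 := by omega
  have h3 : (4*n+4) % 4 = 0 := by omega
  simp only [y, h1, h2, if_false, h3]
  funext i; fin_cases i <;> simp [α] <;> omega

lemma y_m1 (n : ℕ) : y (4*n+5) = ![0, α (4*n+4), α (4*n+5), α (4*n+6)] := by
  have h1 : 4*n+5 ≠ 1 := by omega
  have h2 : 4*n+5 ≠ 2 := by omega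
  have h3 : (4*n+5) % 4 = 1 := by omega
  simp only [y, h1, h2, if_false, h3]
  funext i; fin_cases i <;> simp [α] <;> omega

lemma y_m2 (n : ℕ) : y (4*n+6) = ![α (4*n+3), 1, α (4*n+5), α (4*n+6)] := by
  have h1 : 4*n+6 ≠ 1 := by omega
  have h2 : 4*n+6 ≠ 2 := by omega
  have h3 : (4*n+6) % 4 = 2 := by omega
  simp only [y, h1, h2, if_false, h3]
  funext i; fin_cases i <;> simp [α] <;> omega

/-- One block of the recursive solution: values (t₍₄ₙ₊₁₎, t₍₄ₙ₊₂₎, t₍₄ₙ₊₃₎, t₍₄ₙ₊₄₎),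
where `prev` stands for t₍₄ₙ₎. -/
noncomputable def step (f : (Fin 4 → ℕ) → ℂ) (n : ℕ) (prev : ℂ) : ℂ × ℂ × ℂ × ℂ :=
  let S1 := f (y (4*n+1)) - prev
  let D1 := f (y (4*n+3)) - f (y (4*n+4)) + f (y 1)
  let b := (S1 + D1)/2
  let S2 := f (y (4*n+3)) - b
  let D2 := f (y (4*n+5)) - f (y (4*n+6))
  ((S1 - D1)/2, b, (S2 - D2)/2, (S2 + D2)/2)

noncomputable def Q (f : (Fin 4 → ℕ) → ℂ) : ℕ → ℂ × ℂ × ℂ × ℂ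
  | 0 => step f 0 (f (y 1) - f (y 2))
  | n+1 => step f (n+1) (Q f n).2.2.2

/-- t j : the value of the solution at symbol α j. -/
noncomputable def tt (f : (Fin 4 → ℕ) → ℂ) (j : ℕ) : ℂ :=
  match (j - 1) % 4 with
  | 0 => (Q f ((j-1)/4)).1
  | 1 => (Q f ((j-1)/4)).2.1
  | 2 => (Q f ((j-1)/4)).2.2.1
  | _ => (Q f ((j-1)/4)).2.2.2

lemma tt1 (f) (n : ℕ) : tt f (4*n+1) = (Q f n).1 := by
  have h : (4*n+1-1) % 4 = 0 := by omega
  have h2 : (4*n+1-1)/4 = n := by omega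
  simp only [tt, h, h2]

lemma tt2 (f) (n : ℕ) : tt f (4*n+2) = (Q f n).2.1 := by
  have h : (4*n+2-1) % 4 = 1 := by omega
  have h2 : (4*n+2-1)/4 = n := by omega
  simp only [tt, h, h2]

lemma tt3 (f) (n : ℕ) : tt f (4*n+3) = (Q f n).2.2.1 := by
  have h : (4*n+3-1) % 4 = 2 := by omega
  have h2 : (4*n+3-1)/4 = n := by omega
  simp only [tt, h, h2]

lemma tt4 (f) (n : ℕ) : tt f (4*n+4) = (Q f n).2.2.2 := by
  have h : (4*n+4-1) % 4 = 3 := by omega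
  have h2 : (4*n+4-1)/4 = n := by omega
  simp only [tt, h, h2]

/-- Identities I1₀, I1ₛ, I2, I3, I4. -/
lemma I1_zero (f) : tt f 1 + tt f 2 = f (y 2) := by
  have a1 := tt1 f 0; have a2 := tt2 f 0
  simp only [Nat.mul_zero, Nat.zero_add] at a1 a2
  rw [a1, a2]; simp only [Q, step]; ring

lemma I1_succ (f) (n : ℕ) :
    tt f (4*n+5) + tt f (4*n+6) = f (y (4*n+5)) - tt f (4*n+4) := by
  have a1 : 4*n+5 = 4*(n+1)+1 := by ring
  have a2 : 4*n+6 = 4*(n+1)+2 := by ring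
  rw [a1, a2, tt1, tt2, tt4]
  show (step f (n+1) _).1 + (step f (n+1) _).2.1 = _
  simp only [step]
  have e : 4*(n+1)+1 = 4*n+5 := by ring
  rw [e]; ring

lemma I2 (f) (n : ℕ) :
    tt f (4*n+2) - tt f (4*n+1) = f (y (4*n+3)) - f (y (4*n+4)) + f (y 1) := by
  rw [tt1, tt2]
  cases n with
  | zero => simp only [Q, step]; norm_num; ring
  | succ m =>
    show (step f (m+1) _).2.1 - (step f (m+1) _).1 = _
    simp only [step]; ring

lemma I3 (f) (n : ℕ) :
    tt f (4*n+3) + tt f (4*n+4) = f (y (4*n+3)) - tt f (4*n+2) := by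
  rw [tt2, tt3, tt4]
  cases n with
  | zero => simp only [Q, step]; norm_num; ring
  | succ m =>
    show (step f (m+1) _).2.2.1 + (step f (m+1) _).2.2.2
        = _ - (step f (m+1) _).2.1
    simp only [step]; ring

lemma I4 (f) (n : ℕ) :
    tt f (4*n+4) - tt f (4*n+3) = f (y (4*n+5)) - f (y (4*n+6)) := by
  rw [tt3, tt4]
  cases n with
  | zero => simp only [Q, step]; norm_num; ring
  | succ m =>
    show (step f (m+1) _).2.2.2 - (step f (m+1) _).2.2.1 = _
    simp only [step]
    have e1 : 4*(m+1)+5 = 4*m+9 := by ring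
    have e2 : 4*(m+1)+6 = 4*m+10 := by ring
    rw [e1, e2]; ring

/-- The explicit solution: value at a symbol (independent of the coordinate). -/
noncomputable def uu (f : (Fin 4 → ℕ) → ℂ) (s : ℕ) : ℂ :=
  if s ≤ 2 then 0 else if s = 3 then f (y 1) else tt f (s - 3)

lemma uu_alpha (f) (j : ℕ) (hj : 1 ≤ j) : uu f (α j) = tt f j := by
  have h1 : ¬ (j + 3 ≤ 2) := by omega
  have h2 : j + 3 ≠ 3 := by omega
  have h3 : j + 3 - 3 = j := rfl
  simp only [α, uu, h1, h2, if_false, h3]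

lemma uu0 (f) : uu f 0 = 0 := by simp [uu]
lemma uu1 (f) : uu f 1 = 0 := by simp [uu]
lemma uu2 (f) : uu f 2 = 0 := by simp [uu]
lemma uu3 (f) : uu f 3 = f (y 1) := by simp [uu]

lemma sum_vec (g : ℕ → ℂ) (a b c d : ℕ) :
    (∑ i : Fin 4, g (![a,b,c,d] i)) = g a + g b + g c + g d := by
  simp [Fin.sum_univ_four]

/-- The construction indeed solves equation (1) on all of S. -/
lemma solves_uu (f) : Solves Sinf f (fun _ => uu f) := by
  rintro p ⟨k, hk, rfl⟩
  simp only [Set.mem_Ici] at hk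
  show f (y k) = ∑ i : Fin 4, uu f (y k i)
  have hcase : k = 1 ∨ k = 2 ∨ ∃ n, k = 4*n+3 ∨ k = 4*n+4 ∨ k = 4*n+5 ∨ k = 4*n+6 := by
    rcases Nat.lt_or_ge k 3 with h | h
    · omega
    · exact Or.inr (Or.inr ⟨(k-3)/4, by omega⟩)
  rcases hcase with h | h | ⟨n, h | h | h | h⟩ <;> subst h
  · rw [y_one, sum_vec, uu0, uu1, uu2, uu3, y_one]; ring
  · rw [y_two, sum_vec, uu0, uu1, uu_alpha f 1 (by omega), uu_alpha f 2 (by omega)]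
    have h := I1_zero f
    rw [y_two] at h
    linear_combination -h
  · rw [y_m3, sum_vec, uu_alpha f _ (by omega), uu_alpha f _ (by omega), uu2,
      uu_alpha f _ (by omega)]
    have h := I3 f n
    rw [y_m3] at h
    linear_combination -h
  · rw [y_m0, sum_vec, uu_alpha f _ (by omega), uu_alpha f _ (by omega),
      uu_alpha f _ (by omega), uu3]
    have h1 := I3 f n
    have h2 := I2 f n
    rw [y_m0] at h2
    linear_combination -h1 + h2
  · rw [y_m1, sum_vec, uu0, uu_alpha f _ (by omega), uu_alpha f _ (by omega),
      uu_alpha f _ (by omega)]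
    have h := I1_succ f n
    rw [y_m1] at h
    linear_combination -h
  · rw [y_m2, sum_vec, uu_alpha f _ (by omega), uu1, uu_alpha f _ (by omega),
      uu_alpha f _ (by omega)]
    have h1 := I1_succ f n
    have h2 := I4 f n
    rw [y_m2] at h2
    linear_combination -h1 + h2

lemma good_Sinf : IsGood Sinf := fun f => ⟨fun _ => uu f, solves_uu f⟩

lemma mem_proj_iff {i : Fin 4} {a : ℕ} : a ∈ proj Sinf i ↔ ∃ k, 1 ≤ k ∧ y k i = a := by
  constructor
  · rintro ⟨p, ⟨k, hk, rfl⟩, rfl⟩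
    exact ⟨k, hk, rfl⟩
  · rintro ⟨k, hk, rfl⟩
    exact ⟨y k, ⟨k, hk, rfl⟩, rfl⟩

lemma gauge_Sinf (f : (Fin 4 → ℕ) → ℂ) (u v : Fin 4 → ℕ → ℂ)
    (hu : Solves Sinf f u) (hv : Solves Sinf f v) :
    ∃ r : Fin 4 → ℂ, (r 0 + r 1 + r 2 + r 3 = 0) ∧
      ∀ i : Fin 4, ∀ a ∈ proj Sinf i, u i a = v i a + r i := by
  set w : Fin 4 → ℕ → ℂ := fun i s => u i s - v i s with hwdef
  have hEe : ∀ (k : ℕ), 1 ≤ k → ∀ a b c d : ℕ, y k = ![a,b,c,d] →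
      w 0 a + w 1 b + w 2 c + w 3 d = 0 := by
    intro k hk a b c d hy
    have h1 := hu (y k) ⟨k, hk, rfl⟩
    have h2 := hv (y k) ⟨k, hk, rfl⟩
    rw [hy] at h1 h2
    rw [Fin.sum_univ_four] at h1 h2
    simp only [hwdef]
    simp only [Matrix.cons_val_zero, Matrix.cons_val_one, Matrix.head_cons,
      Matrix.cons_val_two, Matrix.tail_cons, Matrix.cons_val_three] at h1 h2
    linear_combination h2 - h1
  have e1 := hEe 1 (by omega) _ _ _ _ y_one
  have e2 := hEe 2 (by omega) _ _ _ _ y_two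
  have e3 : ∀ n, w 0 (α (4*n+3)) + w 1 (α (4*n+4)) + w 2 2 + w 3 (α (4*n+2)) = 0 :=
    fun n => hEe _ (by omega) _ _ _ _ (y_m3 n)
  have e4 : ∀ n, w 0 (α (4*n+3)) + w 1 (α (4*n+4)) + w 2 (α (4*n+1)) + w 3 3 = 0 :=
    fun n => hEe _ (by omega) _ _ _ _ (y_m0 n)
  have e5 : ∀ n, w 0 0 + w 1 (α (4*n+4)) + w 2 (α (4*n+5)) + w 3 (α (4*n+6)) = 0 :=
    fun n => hEe _ (by omega) _ _ _ _ (y_m1 n)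
  have e6 : ∀ n, w 0 (α (4*n+3)) + w 1 1 + w 2 (α (4*n+5)) + w 3 (α (4*n+6)) = 0 :=
    fun n => hEe _ (by omega) _ _ _ _ (y_m2 n)
  have hP : ∀ n, w 2 (α (4*n+1)) = w 2 2 ∧ w 3 (α (4*n+2)) = w 3 3 ∧
      w 0 (α (4*n+3)) = w 0 0 ∧ w 1 (α (4*n+4)) = w 1 1 := by
    intro n
    induction n with
    | zero =>
      have f3 := e3 0; have f4 := e4 0; have f5 := e5 0; have f6 := e6 0
      norm_num at f3 f4 f5 f6 ⊢
      have h1 : w 2 (α 1) = w 2 2 := by linear_combination (e2 - e1 + f4 - f3)/2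
      have h2 : w 3 (α 2) = w 3 3 := by linear_combination (e2 - e1 + f3 - f4)/2
      have h3 : w 0 (α 3) = w 0 0 := by linear_combination (f3 + f6 - f5 - h2 - e1)/2
      have h4 : w 1 (α 4) = w 1 1 := by linear_combination f5 - f6 + h3
      exact ⟨h1, h2, h3, h4⟩
    | succ m ih =>
      obtain ⟨-, -, -, ihB⟩ := ih
      have g5 := e5 m
      have g7 := e3 (m+1); have g8 := e4 (m+1)
      have g9 := e5 (m+1); have g10 := e6 (m+1)
      simp only [show 4*(m+1)+1 = 4*m+5 from by ring, show 4*(m+1)+2 = 4*m+6 from by ring,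
        show 4*(m+1)+3 = 4*m+7 from by ring, show 4*(m+1)+4 = 4*m+8 from by ring,
        show 4*(m+1)+5 = 4*m+9 from by ring, show 4*(m+1)+6 = 4*m+10 from by ring]
        at g7 g8 g9 g10 ⊢
      have h1 : w 2 (α (4*m+5)) = w 2 2 := by
        linear_combination (g5 - ihB - e1 + g8 - g7)/2
      have h2 : w 3 (α (4*m+6)) = w 3 3 := by
        linear_combination (g5 - ihB - e1 + g7 - g8)/2
      have h3 : w 0 (α (4*m+7)) = w 0 0 := by
        linear_combination (g7 - h2 + g10 - g9 - e1)/2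
      have h4 : w 1 (α (4*m+8)) = w 1 1 := by
        linear_combination g9 - g10 + h3
      exact ⟨h1, h2, h3, h4⟩
  refine ⟨![w 0 0, w 1 1, w 2 2, w 3 3], by simpa using e1, ?_⟩
  have key : ∀ k, 1 ≤ k → ∀ i : Fin 4, w i (y k i) = ![w 0 0, w 1 1, w 2 2, w 3 3] i := by
    intro k hk
    have hcase : k = 1 ∨ k = 2 ∨ ∃ n, k = 4*n+3 ∨ k = 4*n+4 ∨ k = 4*n+5 ∨ k = 4*n+6 := by
      rcases Nat.lt_or_ge k 3 with h | h
      · omega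
      · exact Or.inr (Or.inr ⟨(k-3)/4, by omega⟩)
    rcases hcase with h | h | ⟨n, h | h | h | h⟩ <;> subst h <;> intro i
    · rw [y_one]; fin_cases i <;> rfl
    · rw [y_two]; fin_cases i <;> simp only [Matrix.cons_val_zero, Matrix.cons_val_one,
        Matrix.head_cons, Matrix.cons_val_two, Matrix.tail_cons, Matrix.cons_val_three]
      · rfl
      · rfl
      · have := (hP 0).1; norm_num at this; exact this
      · have := (hP 0).2.1; norm_num at this; exact this
    · rw [y_m3]; fin_cases i <;> simp only [Matrix.cons_val_zero, Matrix.cons_val_one,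
        Matrix.head_cons, Matrix.cons_val_two, Matrix.tail_cons, Matrix.cons_val_three]
      · exact (hP n).2.2.1
      · exact (hP n).2.2.2
      · rfl
      · exact (hP n).2.1
    · rw [y_m0]; fin_cases i <;> simp only [Matrix.cons_val_zero, Matrix.cons_val_one,
        Matrix.head_cons, Matrix.cons_val_two, Matrix.tail_cons, Matrix.cons_val_three]
      · exact (hP n).2.2.1
      · exact (hP n).2.2.2
      · exact (hP n).1
      · rfl
    · rw [y_m1]; fin_cases i <;> simp only [Matrix.cons_val_zero, Matrix.cons_val_one,
        Matrix.head_cons, Matrix.cons_val_two, Matrix.tail_cons, Matrix.cons_val_three]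
      · rfl
      · exact (hP n).2.2.2
      · have := (hP (n+1)).1
        rw [show 4*(n+1)+1 = 4*n+5 from by ring] at this; exact this
      · have := (hP (n+1)).2.1
        rw [show 4*(n+1)+2 = 4*n+6 from by ring] at this; exact this
    · rw [y_m2]; fin_cases i <;> simp only [Matrix.cons_val_zero, Matrix.cons_val_one,
        Matrix.head_cons, Matrix.cons_val_two, Matrix.tail_cons, Matrix.cons_val_three]
      · exact (hP n).2.2.1
      · rfl
      · have := (hP (n+1)).1
        rw [show 4*(n+1)+1 = 4*n+5 from by ring] at this; exact this
      · have := (hP (n+1)).2.1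
        rw [show 4*(n+1)+2 = 4*n+6 from by ring] at this; exact this
  intro i a ha
  obtain ⟨k, hk, rfl⟩ := mem_proj_iff.mp ha
  have h := key k hk i
  simp only [hwdef] at h ⊢
  linear_combination h

lemma yclass : ∀ k, 1 ≤ k → ∀ i : Fin 4,
    y k i = (i : ℕ) ∨ (4 ≤ y k i ∧ y k i % 4 = ((i : ℕ) + 2) % 4) := by
  intro k hk
  have hcase : k = 1 ∨ k = 2 ∨ ∃ n, k = 4*n+3 ∨ k = 4*n+4 ∨ k = 4*n+5 ∨ k = 4*n+6 := by
    rcases Nat.lt_or_ge k 3 with h | h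
    · omega
    · exact Or.inr (Or.inr ⟨(k-3)/4, by omega⟩)
  rcases hcase with h | h | ⟨n, h | h | h | h⟩ <;> subst h <;> intro i
  · rw [y_one]; fin_cases i <;> simp
  · rw [y_two]; fin_cases i <;> simp [α] <;> omega
  · rw [y_m3]; fin_cases i <;> simp [α] <;> omega
  · rw [y_m0]; fin_cases i <;> simp [α] <;> omega
  · rw [y_m1]; fin_cases i <;> simp [α] <;> omega
  · rw [y_m2]; fin_cases i <;> simp [α] <;> omega

lemma proj_disj {i j : Fin 4} {m : ℕ} (hi : m ∈ proj Sinf i) (hj : m ∈ proj Sinf j) :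
    i = j := by
  obtain ⟨k, hk, hki⟩ := mem_proj_iff.mp hi
  obtain ⟨l, hl, hlj⟩ := mem_proj_iff.mp hj
  have ci := yclass k hk i
  have cj := yclass l hl j
  rw [hki] at ci; rw [hlj] at cj
  fin_cases i <;> fin_cases j <;> simp_all <;> omega

lemma self_mem_proj (i : Fin 4) : (i : ℕ) ∈ proj Sinf i :=
  mem_proj_iff.mpr ⟨1, le_refl 1, by rw [y_one]; fin_cases i <;> rfl⟩

lemma full_Sinf : IsFull Sinf := by
  refine ⟨good_Sinf, ?_⟩
  intro T hST hproj hgood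
  apply Set.Subset.antisymm _ hST
  intro p hp
  by_contra hpS
  classical
  set f : (Fin 4 → ℕ) → ℂ := fun q => if q = p then 1 else 0 with hf
  obtain ⟨u, hu⟩ := hgood f
  have huS : Solves Sinf f u := fun q hq => hu q (hST hq)
  have hv : Solves Sinf f (fun _ _ => 0) := by
    intro q hq
    have hqp : q ≠ p := fun h => hpS (h ▸ hq)
    simp [hf, hqp]
  obtain ⟨r, hrsum, hr⟩ := gauge_Sinf f u _ huS hv
  have h1 : (1 : ℂ) = ∑ i, u i (p i) := by simpa [hf] using hu p hp
  have h2 : ∀ i, u i (p i) = r i := by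
    intro i
    simpa using hr i (p i) (hproj p hp i)
  rw [Fin.sum_univ_four, h2 0, h2 1, h2 2, h2 3, hrsum] at h1
  exact one_ne_zero h1

lemma boundary_card (B : Set ℕ) (hB : IsBoundary Sinf B) : B.ncard = 3 := by
  obtain ⟨hsub, hmain⟩ := hB
  classical
  have zeroSol : Solves Sinf (fun _ => 0) (fun _ _ => 0) := by
    intro q hq; simp
  have constSol : ∀ r : Fin 4 → ℂ, r 0 + r 1 + r 2 + r 3 = 0 →
      Solves Sinf (fun _ => 0) (fun i _ => r i) := by
    intro r hr q hq
    rw [Fin.sum_univ_four]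
    exact hr.symm
  have hconst : ∀ u, Solves Sinf (fun _ => 0) u → ∃ r : Fin 4 → ℂ,
      r 0 + r 1 + r 2 + r 3 = 0 ∧ ∀ i, ∀ a ∈ proj Sinf i, u i a = r i := by
    intro u hu
    obtain ⟨r, h0, h⟩ := gauge_Sinf _ u _ hu zeroSol
    exact ⟨r, h0, fun i a ha => by simpa using h i a ha⟩
  have step1 : ∀ i : Fin 4, ∀ a ∈ B ∩ proj Sinf i, ∀ a' ∈ B ∩ proj Sinf i, a = a' := by
    intro i a ha a' ha'
    by_contra hne
    set U : ℕ → ℂ := fun s => if s = a then 0 else 1 with hU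
    obtain ⟨⟨u, hu, hBu⟩, -⟩ := hmain (fun _ => 0) U
    obtain ⟨r, -, hr⟩ := hconst u hu
    have h1 : u i a = 0 := by rw [hBu i a ha]; simp [hU]
    have h2 : u i a' = 1 := by
      rw [hBu i a' ha']; simp [hU, Ne.symm hne]
    have h3 := (hr i a ha.2).trans (hr i a' ha'.2).symm
    rw [h1, h2] at h3
    exact one_ne_zero h3.symm
  have step2 : ∀ i j : Fin 4, i ≠ j → B ∩ proj Sinf i = ∅ → B ∩ proj Sinf j = ∅ → False := by
    intro i j hij hi hj
    set r : Fin 4 → ℂ := fun k => if k = i then 1 else if k = j then -1 else 0 with hrdef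
    have hpt : ∀ k : Fin 4, r k = (if k = i then (1:ℂ) else 0) + (if k = j then (-1:ℂ) else 0) := by
      intro k
      by_cases h1 : k = i
      · subst h1; simp [hrdef, hij]
      · by_cases h2 : k = j
        · subst h2; simp [hrdef, h1]
        · simp [hrdef, h1, h2]
    have hsum : r 0 + r 1 + r 2 + r 3 = 0 := by
      calc r 0 + r 1 + r 2 + r 3 = ∑ k : Fin 4, r k := (Fin.sum_univ_four r).symm
        _ = ∑ k : Fin 4, ((if k = i then (1:ℂ) else 0) + (if k = j then (-1:ℂ) else 0)) :=
            Finset.sum_congr rfl (fun k _ => hpt k)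
        _ = 0 := by
            rw [Finset.sum_add_distrib, Finset.sum_ite_eq', Finset.sum_ite_eq']
            simp
    have hu : Solves Sinf (fun _ => 0) (fun k _ => r k) := constSol r hsum
    obtain ⟨-, huniq⟩ := hmain (fun _ => 0) (fun _ => 0)
    have hBu : ∀ k : Fin 4, ∀ a ∈ B ∩ proj Sinf k, r k = (0 : ℂ) := by
      intro k a ha
      have hk1 : k ≠ i := by rintro rfl; rw [hi] at ha; exact absurd ha (Set.notMem_empty a)
      have hk2 : k ≠ j := by rintro rfl; rw [hj] at ha; exact absurd ha (Set.notMem_empty a)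
      simp [hrdef, hk1, hk2]
    have hfin := huniq (fun k _ => r k) (fun _ _ => 0) hu
      (fun k a ha => hBu k a ha) zeroSol (fun _ _ _ => rfl) i (i : ℕ) (self_mem_proj i)
    simp [hrdef] at hfin
  have step3 : ¬ ∀ i : Fin 4, (B ∩ proj Sinf i).Nonempty := by
    intro hall
    choose a hmem using hall
    obtain ⟨⟨u, hu, hBu⟩, -⟩ := hmain (fun _ => 0) (fun _ => 1)
    obtain ⟨r, hrs, hr⟩ := hconst u hu
    have h1 : ∀ i, r i = 1 := fun i => by
      rw [← hr i (a i) (hmem i).2, hBu i (a i) (hmem i)]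
    rw [h1 0, h1 1, h1 2, h1 3] at hrs
    norm_num at hrs
  obtain ⟨i₀, hi₀⟩ : ∃ i₀, B ∩ proj Sinf i₀ = ∅ := by
    by_contra h
    push_neg at h
    exact step3 h
  have hne : ∀ i, i ≠ i₀ → (B ∩ proj Sinf i).Nonempty := by
    intro i hi
    rcases Set.eq_empty_or_nonempty (B ∩ proj Sinf i) with h | h
    · exact (step2 i i₀ hi h hi₀).elim
    · exact h
  have main : ∀ i1 i2 i3 : Fin 4, i1 ≠ i2 → i1 ≠ i3 → i2 ≠ i3 →
      i1 ≠ i₀ → i2 ≠ i₀ → i3 ≠ i₀ →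
      (∀ j : Fin 4, j = i₀ ∨ j = i1 ∨ j = i2 ∨ j = i3) → B.ncard = 3 := by
    intro i1 i2 i3 h12 h13 h23 h1 h2 h3 hcover
    obtain ⟨b1, hb1⟩ := hne i1 h1
    obtain ⟨b2, hb2⟩ := hne i2 h2
    obtain ⟨b3, hb3⟩ := hne i3 h3
    have hBeq : B = {b1, b2, b3} := by
      ext a
      constructor
      · intro ha
        obtain ⟨i, hi⟩ : ∃ i, a ∈ proj Sinf i := by
          simpa [Set.mem_iUnion] using hsub ha
        have hii : i ≠ i₀ := by
          rintro rfl
          rw [Set.eq_empty_iff_forall_notMem] at hi₀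
          exact hi₀ a ⟨ha, hi⟩
        rcases hcover i with h | h | h | h
        · exact absurd h hii
        · subst h; exact Or.inl (step1 i a ⟨ha, hi⟩ b1 hb1)
        · subst h; exact Or.inr (Or.inl (step1 i a ⟨ha, hi⟩ b2 hb2))
        · subst h; exact Or.inr (Or.inr (step1 i a ⟨ha, hi⟩ b3 hb3))
      · rintro (rfl | rfl | rfl)
        exacts [hb1.1, hb2.1, hb3.1]
    rw [hBeq, Set.ncard_eq_three]
    refine ⟨b1, b2, b3, ?_, ?_, ?_, rfl⟩
    · intro h; rw [h] at hb1; exact h12 (proj_disj hb1.2 hb2.2)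
    · intro h; rw [h] at hb1; exact h13 (proj_disj hb1.2 hb3.2)
    · intro h; rw [h] at hb2; exact h23 (proj_disj hb2.2 hb3.2)
  fin_cases i₀
  · exact main 1 2 3 (by decide) (by decide) (by decide) (by decide) (by decide) (by decide)
      (by decide)
  · exact main 0 2 3 (by decide) (by decide) (by decide) (by decide) (by decide) (by decide)
      (by decide)
  · exact main 0 1 3 (by decide) (by decide) (by decide) (by decide) (by decide) (by decide)
      (by decide)
  · exact main 0 1 2 (by decide) (by decide) (by decide) (by decide) (by decide) (by decide)
      (by decide)

/-- every boundary set of S has exactly 3 elements; hence S is full. -/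
theorem stmt_9 :
    (∀ B : Set ℕ, IsBoundary Sinf B → B.ncard = 3) ∧ IsFull Sinf := by
  exact ⟨fun B hB => boundary_card B hB, full_Sinf⟩
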